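/- Let σ² > 0 and for each n let p_n ≤ n with p_n → ∞, and let θ^{(n)} ∈ ℝ^{p_n} satisfy sup_n Σ_j (θ_j^{(n)})² < ∞ and liminf_n max_j |θ_j^{(n)}| > 0. Let a^{(n)} be the decreasing rearrangement of (|θ^{(n)}_1|, …, |θ^{(n)}_{p_n}|). Assume the weak-ordering condition: there exist indices 0 = d_0 < d_1 < ⋯ < d_{D_n} = p_n with max_{1≤l≤D_n−1} (d_{l+1} − d_l)/(d_l − d_{l−1}) ≤ 1 + z_n for some z_n → 0, and such that for each 1 ≤ l ≤ D_n the block (|θ^{(n)}_{d_{l−1}+1}|, …, |θ^{(n)}_{d_l}|) is a permutation of (a^{(n)}_{d_{l−1}+1}, …, a^{(n)}_{d_l}). Let R_n^{A}* be the minimum over W_{p_n} of the nested model-averaging risk of θ^{(n)} with sizes 1, …, p_n in the given coordinate order, and ρ_n^{MA} = ρ^{MA}(θ^{(n)}). If d_1 = o(n ρ_n^{MA}), then R_n^{A}*/ρ_n^{MA} → 1 as n → ∞. -/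

import Mathlib

/-- Cumulative weight `γ j = ∑_{m=j}^{M} w m`. -/
noncomputable def cumw (M : ℕ) (w : ℕ → ℝ) (j : ℕ) : ℝ := ∑ m ∈ Finset.Icc j M, w m

/-- Nested model-averaging risk with candidate sizes `k_m = m`, `m = 1, …, M`:
`R_n(w) = ∑_{j=1}^{M} [(1−γ_j)² θ_j² + σ² γ_j²/n] + ∑_{l=M+1}^{p} θ_l²`. -/
noncomputable def nestedRisk (n p M : ℕ) (σ2 : ℝ) (θ : ℕ → ℝ) (w : ℕ → ℝ) : ℝ :=
  (∑ j ∈ Finset.Icc 1 M, ((1 - cumw M w j) ^ 2 * θ j ^ 2 + σ2 * (cumw M w j) ^ 2 / n))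
    + ∑ l ∈ Finset.Icc (M + 1) p, θ l ^ 2

/-- Risk of the single nested model of size `m`: `R_n(m) = m σ²/n + ∑_{l=m+1}^{p} θ_l²`. -/
noncomputable def msRisk (n p : ℕ) (σ2 : ℝ) (θ : ℕ → ℝ) (m : ℕ) : ℝ :=
  (m : ℝ) * σ2 / n + ∑ l ∈ Finset.Icc (m + 1) p, θ l ^ 2

/-- `w` belongs to the simplex `W_M`. -/
def InSimplex (M : ℕ) (w : ℕ → ℝ) : Prop :=
  (∀ m ∈ Finset.Icc 1 M, 0 ≤ w m) ∧ ∑ m ∈ Finset.Icc 1 M, w m = 1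

/-- `w` belongs to the discrete weight set `W_M(N)`:
each weight is a multiple of `1/N` in `[0,1]` and the weights sum to one. -/
def InSimplexN (M N : ℕ) (w : ℕ → ℝ) : Prop :=
  InSimplex M w ∧ ∀ m ∈ Finset.Icc 1 M, ∃ t : ℕ, t ≤ N ∧ w m = (t : ℝ) / N

/-- Condition 1 (slowly decaying coefficients): there are `κ > 1`, `0 < δ ≤ ν < 1` with
`κν² < 1` such that `δ ≤ |θ ⌊κ l⌋ / θ l| ≤ ν` for all sufficiently large `l`. -/
def Condition1 (θ : ℕ → ℝ) : Prop :=
  ∃ κ δ ν : ℝ, 1 < κ ∧ 0 < δ ∧ δ ≤ ν ∧ ν < 1 ∧ κ * ν ^ 2 < 1 ∧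
    ∀ᶠ l : ℕ in Filter.atTop,
      δ ≤ |θ ⌊κ * (l : ℝ)⌋₊ / θ l| ∧ |θ ⌊κ * (l : ℝ)⌋₊ / θ l| ≤ ν

/-- Condition 2 (fast decaying coefficients): for every `κ > 1`,
`|θ ⌊κ l⌋ / θ l| → 0` as `l → ∞`. -/
def Condition2 (θ : ℕ → ℝ) : Prop :=
  ∀ κ : ℝ, 1 < κ →
    Filter.Tendsto (fun l : ℕ => |θ ⌊κ * (l : ℝ)⌋₊ / θ l|) Filter.atTop (nhds 0)

/-- `a ≍ b`: there are constants `0 < c ≤ C` with `c b_n ≤ a_n ≤ C b_n` eventually. -/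
def AsympEquiv (a b : ℕ → ℝ) : Prop :=
  ∃ c C : ℝ, 0 < c ∧ c ≤ C ∧ ∀ᶠ n in Filter.atTop, c * b n ≤ a n ∧ a n ≤ C * b n

/-- `a = o(b)`: `a_n / b_n → 0`. -/
def LittleO (a b : ℕ → ℝ) : Prop :=
  Filter.Tendsto (fun n => a n / b n) Filter.atTop (nhds 0)

/-- Risk of the subset model `I ⊆ {1, …, p}`: `|I| σ²/n + ∑_{j ∉ I} θ_j²`. -/
noncomputable def subsetMSRisk (n p : ℕ) (σ2 : ℝ) (θ : ℕ → ℝ) (I : Finset ℕ) : ℝ :=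
  (I.card : ℝ) * σ2 / n + ∑ j ∈ Finset.Icc 1 p \ I, θ j ^ 2

/-- Ideal MS risk `ρ^{MS}(θ)`: minimum of the subset-model risks over all `I ⊆ {1, …, p}`. -/
noncomputable def rhoMS (n p : ℕ) (σ2 : ℝ) (θ : ℕ → ℝ) : ℝ :=
  sInf {r : ℝ | ∃ I : Finset ℕ, I ⊆ Finset.Icc 1 p ∧ r = subsetMSRisk n p σ2 θ I}

/-- Coordinate weight `λ_j = ∑_{I : j ∈ I} w_I` induced by a weight vector over all subsets. -/
noncomputable def coordWeight (p : ℕ) (v : Finset ℕ → ℝ) (j : ℕ) : ℝ :=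
  ∑ I ∈ (Finset.Icc 1 p).powerset.filter (fun I => j ∈ I), v I

/-- `v` is a weight vector over all subsets of `{1, …, p}`. -/
def IsSubsetWeight (p : ℕ) (v : Finset ℕ → ℝ) : Prop :=
  (∀ I ∈ (Finset.Icc 1 p).powerset, 0 ≤ v I) ∧ ∑ I ∈ (Finset.Icc 1 p).powerset, v I = 1

/-- All-subset model-averaging risk `∑_{j=1}^{p} [(1 − λ_j)² θ_j² + σ² λ_j²/n]`. -/
noncomputable def subsetMARisk (n p : ℕ) (σ2 : ℝ) (θ : ℕ → ℝ) (v : Finset ℕ → ℝ) : ℝ :=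
  ∑ j ∈ Finset.Icc 1 p,
    ((1 - coordWeight p v j) ^ 2 * θ j ^ 2 + σ2 * (coordWeight p v j) ^ 2 / n)

/-- Ideal MA risk `ρ^{MA}(θ)`: minimum of the all-subset MA risk over all weight vectors. -/
noncomputable def rhoMA (n p : ℕ) (σ2 : ℝ) (θ : ℕ → ℝ) : ℝ :=
  sInf {r : ℝ | ∃ v : Finset ℕ → ℝ, IsSubsetWeight p v ∧ r = subsetMARisk n p σ2 θ v}

/-- first part of Theorem 5 of the paper.  Under the weak-ordering
condition on the coefficients, the optimal nested MA risk `R_n^{A}*` is asymptotically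
equivalent to the ideal all-subset MA risk `ρ_n^{MA}`, provided `d_1 = o(n ρ_n^{MA})`. -/

lemma telescope_Icc (f : ℕ → ℝ) : ∀ M j, j ≤ M →
    ∑ m ∈ Finset.Icc j M, (f m - f (m+1)) = f j - f (M+1) := by
  intro M
  induction M with
  | zero => intro j hj; interval_cases j; simp
  | succ M ih =>
    intro j hj
    rcases Nat.lt_or_ge j (M+1) with h | h
    · rw [Finset.sum_Icc_succ_top (by omega), ih j (by omega)]; ring
    · have : j = M+1 := by omega
      subst this; simp

lemma ptwise_lb (s t lam : ℝ) (ht : 0 ≤ t) (hs : 0 < s) :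
    s * t / (t + s) ≤ (1 - lam)^2 * t + s * lam^2 := by
  rw [div_le_iff₀ (by linarith)]
  nlinarith [sq_nonneg (t * (1 - lam) - s * lam)]

lemma emono (e : ℕ → ℕ) (L : ℕ) (he : ∀ l < L, e l ≤ e (l+1)) :
    ∀ i j, i ≤ j → j ≤ L → e i ≤ e j := by
  intro i j hij hj
  induction j with
  | zero =>
    have hi0 : i = 0 := by omega
    subst hi0; exact le_refl _
  | succ k ihk =>
    rcases Nat.lt_or_ge i (k+1) with h | h
    · exact le_trans (ihk (by omega) (by omega)) (he k (by omega))
    · have : i = k + 1 := by omega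
      subst this; exact le_refl _

lemma sum_blocks (F : ℕ → ℝ) (e : ℕ → ℕ) (h0 : e 0 = 0) :
    ∀ L, (∀ l < L, e l ≤ e (l+1)) →
    ∑ j ∈ Finset.Ioc 0 (e L), F j
      = ∑ l ∈ Finset.range L, ∑ j ∈ Finset.Ioc (e l) (e (l+1)), F j := by
  intro L
  induction L with
  | zero => intro _; simp [h0]
  | succ L ih =>
    intro he
    rw [Finset.sum_range_succ, ← ih (fun l hl => he l (by omega)),
      Finset.sum_Ioc_consecutive _ (Nat.zero_le _) (he L (by omega))]

lemma ptwise_ub (s t b : ℝ) (hs : 0 < s) (ht : 0 ≤ t) (htb : t ≤ b^2) :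
    (1 - b^2/(b^2+s))^2 * t + s * (b^2/(b^2+s))^2 ≤ s * b^2 / (b^2+s) := by
  have hbs : 0 < b^2 + s := by nlinarith [sq_nonneg b]
  have key : s^2*t + s*(b^2)^2 ≤ s*b^2*(b^2+s) := by nlinarith
  calc (1 - b^2/(b^2+s))^2 * t + s * (b^2/(b^2+s))^2
      = (s^2*t + s*(b^2)^2)/(b^2+s)^2 := by field_simp; ring
    _ ≤ (s*b^2*(b^2+s))/(b^2+s)^2 := div_le_div_of_nonneg_right key (by positivity)
    _ = s*b^2/(b^2+s) := by field_simp

lemma gfun_mono (s b1 b2 : ℝ) (hs : 0 < s) (h1 : 0 ≤ b1) (h12 : b1 ≤ b2) :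
    s * b1^2 / (b1^2 + s) ≤ s * b2^2 / (b2^2 + s) := by
  rw [div_le_div_iff₀ (by positivity) (by positivity)]
  nlinarith [mul_le_mul_of_nonneg_left (pow_le_pow_left₀ h1 h12 2) (mul_pos hs hs).le]

lemma lam_mono (s b1 b2 : ℝ) (hs : 0 < s) (h1 : 0 ≤ b1) (h12 : b1 ≤ b2) :
    b1^2 / (b1^2 + s) ≤ b2^2 / (b2^2 + s) := by
  rw [div_le_div_iff₀ (by positivity) (by positivity)]
  nlinarith [mul_le_mul_of_nonneg_left (pow_le_pow_left₀ h1 h12 2) (mul_pos hs hs).le]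

lemma lam_le_one (s b : ℝ) (hs : 0 < s) : b^2/(b^2+s) ≤ 1 := by
  rw [div_le_one (by positivity)]; linarith

-- the big construction
lemma upper_bound (n P Dn : ℕ) (σ2 : ℝ) (θ a : ℕ → ℝ) (d : ℕ → ℕ) (zn : ℝ)
    (hσ : 0 < σ2) (hn : 1 ≤ n) (hP : 1 ≤ P)
    (hamono : ∀ j, 1 ≤ j → j < P → a (j+1) ≤ a j)
    (hanonneg : ∀ j, 1 ≤ j → j ≤ P → 0 ≤ a j)
    (haperm : ((Finset.Icc 1 P).val.map fun j => |θ j|)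
        = ((Finset.Icc 1 P).val.map fun j => a j))
    (hd0 : d 0 = 0) (hdD : d Dn = P)
    (hdmono : ∀ l, l < Dn → d l < d (l+1))
    (hdratio : ∀ l, 1 ≤ l → l ≤ Dn - 1 →
        ((d (l+1) : ℝ) - (d l : ℝ)) ≤ (1 + zn) * ((d l : ℝ) - (d (l-1) : ℝ)))
    (hblock : ∀ l, 1 ≤ l → l ≤ Dn →
        ((Finset.Icc (d (l-1) + 1) (d l)).val.map fun j => |θ j|)
          = ((Finset.Icc (d (l-1) + 1) (d l)).val.map fun j => a j))
    (hz : 0 ≤ 1 + zn) :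
    ∃ w, InSimplex P w ∧ nestedRisk n P P σ2 θ w
      ≤ (d 1 : ℝ) * σ2 / n + (1 + zn) *
          ∑ j ∈ Finset.Icc 1 P, σ2/n * θ j ^ 2 / (θ j ^ 2 + σ2/n) := by
  classical
  set s : ℝ := σ2 / n with hsdef
  have hnR : (0:ℝ) < n := by exact_mod_cast hn
  have hs : 0 < s := div_pos hσ hnR
  have hD1 : 1 ≤ Dn := by
    by_contra h
    have : Dn = 0 := by omega
    rw [this, hd0] at hdD; omega
  have dmono : ∀ i j, i ≤ j → j ≤ Dn → d i ≤ d j :=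
    emono d Dn (fun l hl => (hdmono l hl).le)
  have hdP : ∀ l, l ≤ Dn → d l ≤ P := fun l hl => hdD ▸ dmono l Dn hl le_rfl
  have hd1ge : 1 ≤ d 1 := by
    have h := hdmono 0 hD1
    simp only [Nat.zero_add] at h
    omega
  have hA : ∀ i j, 1 ≤ i → i ≤ j → j ≤ P → a j ≤ a i := by
    intro i j h1 hij hjP
    induction j with
    | zero => omega
    | succ k ihk =>
      rcases Nat.lt_or_ge i (k+1) with h | h
      · exact le_trans (hamono k (by omega) (by omega)) (ihk (by omega) (by omega))
      · have : i = k + 1 := by omega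
        subst this; exact le_refl _
  set bidx : ℕ → ℕ := fun j => Nat.findGreatest (fun l => d l < j) Dn with hbidx
  have hbP : ∀ j, bidx j ≤ Dn := fun j => Nat.findGreatest_le Dn
  have hb0 : ∀ j, 1 ≤ j → d (bidx j) < j := by
    intro j hj
    exact Nat.findGreatest_spec (P := fun l => d l < j) (Nat.zero_le Dn) (by show d 0 < j; omega)
  have hblt : ∀ j, 1 ≤ j → j ≤ P → bidx j < Dn := by
    intro j hj hjP
    rcases Nat.lt_or_ge (bidx j) Dn with h | h
    · exact h
    · have heq : bidx j = Dn := le_antisymm (hbP j) h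
      have := hb0 j hj
      rw [heq, hdD] at this; omega
  have hb1 : ∀ j, 1 ≤ j → j ≤ P → j ≤ d (bidx j + 1) := by
    intro j hj hjP
    by_contra h
    push_neg at h
    have hlt := hblt j hj hjP
    have h2 := Nat.le_findGreatest (P := fun l => d l < j) (by omega : bidx j + 1 ≤ Dn) h
    have heq : Nat.findGreatest (fun l => d l < j) Dn = bidx j := rfl
    omega
  have hbconst : ∀ l, l < Dn → ∀ j, d l < j → j ≤ d (l+1) → bidx j = l := by
    intro l hl j hlj hjl
    have hge : l ≤ bidx j := by
      have h2 := Nat.le_findGreatest (P := fun i => d i < j) (by omega : l ≤ Dn) hlj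
      have heq : Nat.findGreatest (fun i => d i < j) Dn = bidx j := rfl
      omega
    have hj1 : 1 ≤ j := by omega
    have hjP : j ≤ P := le_trans hjl (hdP (l+1) (by omega))
    rcases Nat.lt_or_ge l (bidx j) with h | h
    · exfalso
      have : d (l+1) ≤ d (bidx j) := dmono (l+1) (bidx j) (by omega) (hbP j)
      have := hb0 j hj1
      omega
    · omega
  set γ : ℕ → ℝ := fun j => if bidx j = 0 then 1
      else (a (d (bidx j) + 1))^2 / ((a (d (bidx j) + 1))^2 + s) with hγ
  have hγ0 : ∀ j, 0 ≤ γ j := by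
    intro j; simp only [hγ]
    split_ifs
    · norm_num
    · positivity
  have hγ1 : ∀ j, γ j ≤ 1 := by
    intro j; simp only [hγ]
    split_ifs
    · exact le_rfl
    · exact lam_le_one s _ hs
  have hγanti : ∀ j j', 1 ≤ j → j ≤ j' → j' ≤ P → γ j' ≤ γ j := by
    intro j j' hj hjj' hj'P
    have hbm : bidx j ≤ bidx j' := by
      have h2 := Nat.le_findGreatest (P := fun l => d l < j') (hbP j)
        (lt_of_lt_of_le (hb0 j hj) hjj')
      have heq : Nat.findGreatest (fun l => d l < j') Dn = bidx j' := rfl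
      omega
    simp only [hγ]
    split_ifs with h1 h2 h2
    · exact le_rfl
    · omega
    · exact lam_le_one s _ hs
    · -- both nonzero
      have hbj'lt : bidx j' < Dn := hblt j' (by omega) hj'P
      have hidx : d (bidx j) + 1 ≤ d (bidx j') + 1 := by
        have := dmono (bidx j) (bidx j') hbm (hbP j')
        omega
      have hiP : d (bidx j') + 1 ≤ P := by
        have := hb0 j' (by omega)
        omega
      exact lam_mono s _ _ hs (hanonneg _ (by omega) hiP)
        (hA (d (bidx j) + 1) (d (bidx j') + 1) (by omega) hidx hiP)
  have hbidx1 : bidx 1 = 0 := by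
    by_contra h
    have h1 : 1 ≤ bidx 1 := by omega
    have : d 1 ≤ d (bidx 1) := dmono 1 (bidx 1) h1 (hbP 1)
    have := hb0 1 le_rfl
    omega
  have hγone : γ 1 = 1 := by simp only [hγ, hbidx1, if_pos]
  set w : ℕ → ℝ := fun m =>
    (if m ≤ P then γ m else 0) - (if m + 1 ≤ P then γ (m+1) else 0) with hw
  have hcum : ∀ j, 1 ≤ j → j ≤ P → cumw P w j = γ j := by
    intro j hj hjP
    rw [cumw, hw]
    rw [telescope_Icc (fun m => if m ≤ P then γ m else 0) P j hjP]
    rw [if_pos hjP, if_neg (by omega)]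
    ring
  have hsimplex : InSimplex P w := by
    constructor
    · intro m hm
      simp only [Finset.mem_Icc] at hm
      simp only [hw]
      rw [if_pos hm.2]
      split_ifs with h
      · have := hγanti m (m+1) hm.1 (by omega) h
        linarith
      · have := hγ0 m; linarith
    · have := hcum 1 le_rfl hP
      rw [cumw] at this
      rw [this, hγone]
  refine ⟨w, hsimplex, ?_⟩
  set F : ℕ → ℝ := fun j => if bidx j = 0 then s
      else s * (a (d (bidx j) + 1))^2 / ((a (d (bidx j) + 1))^2 + s) with hF
  have hstep1 : nestedRisk n P P σ2 θ w ≤ ∑ j ∈ Finset.Icc 1 P, F j := by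
    rw [nestedRisk, Finset.Icc_eq_empty (by omega : ¬ P + 1 ≤ P), Finset.sum_empty, add_zero]
    apply Finset.sum_le_sum
    intro j hj
    simp only [Finset.mem_Icc] at hj
    rw [hcum j hj.1 hj.2]
    have hterm : σ2 * (γ j)^2 / n = s * (γ j)^2 := by rw [hsdef]; ring
    rw [hterm]
    simp only [hγ, hF]
    split_ifs with h
    · norm_num
    · -- θ j ^ 2 ≤ b ^ 2 via hblock
      set l := bidx j with hl
      have hlDn : l < Dn := hblt j hj.1 hj.2
      have hjmem : j ∈ Finset.Icc (d l + 1) (d (l+1)) := by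
        simp only [Finset.mem_Icc]
        exact ⟨by have h9 := hb0 j hj.1; rw [← hl] at h9; omega, by have h9 := hb1 j hj.1 hj.2; rw [← hl] at h9; exact h9⟩
      have hper := hblock (l+1) (Nat.le_add_left 1 l) hlDn
      have : (l + 1 - 1) = l := by omega
      rw [this] at hper
      have hmem : |θ j| ∈ ((Finset.Icc (d l + 1) (d (l+1))).val.map fun i => |θ i|) :=
        Multiset.mem_map.mpr ⟨j, hjmem, rfl⟩
      rw [hper] at hmem
      obtain ⟨j', hj', hj'eq⟩ := Multiset.mem_map.mp hmem
      rw [Finset.mem_val, Finset.mem_Icc] at hj'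
      have hj'P : j' ≤ P := le_trans hj'.2 (hdP (l+1) (by omega))
      have hab : |θ j| ≤ a (d l + 1) := by
        rw [← hj'eq]
        exact hA (d l + 1) j' (by omega) hj'.1 hj'P
      have habs : θ j ^ 2 ≤ (a (d l + 1))^2 := by
        rw [← sq_abs (θ j)]
        exact pow_le_pow_left₀ (abs_nonneg _) hab 2
      have := ptwise_ub s (θ j ^ 2) (a (d l + 1)) hs (sq_nonneg _) habs
      linarith
  -- block decomposition of ∑ F
  have hIcc_Ioc : Finset.Icc 1 P = Finset.Ioc 0 P := by
    ext x; simp [Finset.mem_Icc, Finset.mem_Ioc]; omega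
  have hsplit : ∑ j ∈ Finset.Icc 1 P, F j
      = ∑ l ∈ Finset.range Dn, ∑ j ∈ Finset.Ioc (d l) (d (l+1)), F j := by
    rw [hIcc_Ioc, ← hdD]
    exact sum_blocks F d hd0 Dn (fun l hl => (hdmono l hl).le)
  set φa : ℕ → ℝ := fun j => s * (a j)^2 / ((a j)^2 + s) with hφa
  have hT0 : ∑ j ∈ Finset.Ioc (d 0) (d (0+1)), F j = (d 1 : ℝ) * s := by
    have hc : ∀ j ∈ Finset.Ioc (d 0) (d (0+1)), F j = s := by
      intro j hj
      simp only [Finset.mem_Ioc] at hj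
      have hb := hbconst 0 (by omega) j hj.1 hj.2
      simp only [hF, hb, if_pos]
    rw [Finset.sum_congr rfl hc, Finset.sum_const, Nat.card_Ioc, nsmul_eq_mul, hd0]
    norm_num
  have hsum_split : ∑ l ∈ Finset.range Dn, ∑ j ∈ Finset.Ioc (d l) (d (l+1)), F j
      = (∑ j ∈ Finset.Ioc (d 0) (d (0+1)), F j)
        + ∑ l ∈ Finset.Ico 1 Dn, ∑ j ∈ Finset.Ioc (d l) (d (l+1)), F j := by
    rw [Finset.range_eq_Ico,
      ← Finset.sum_Ico_consecutive _ (Nat.zero_le 1) hD1]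
    congr 1
    rw [show Finset.Ico 0 1 = {0} by rfl, Finset.sum_singleton]
  have hmain : ∀ l ∈ Finset.Ico 1 Dn,
      ∑ j ∈ Finset.Ioc (d l) (d (l+1)), F j
        ≤ (1 + zn) * ∑ j ∈ Finset.Ioc (d (l-1)) (d l), φa j := by
    intro l hl
    rw [Finset.mem_Ico] at hl
    have hld : l < Dn := hl.2
    have hdl1 : 1 ≤ d l := le_trans hd1ge (dmono 1 l hl.1 (by omega))
    have hdlP : d l ≤ P := hdP l (by omega)
    have hdl1P : d (l+1) ≤ P := hdP (l+1) (by omega)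
    have hdlltP : d l < P := lt_of_lt_of_le (hdmono l hld) hdl1P
    have hFconst : ∀ j ∈ Finset.Ioc (d l) (d (l+1)),
        F j = s * (a (d l + 1))^2 / ((a (d l + 1))^2 + s) := by
      intro j hj
      simp only [Finset.mem_Ioc] at hj
      have hb := hbconst l hld j hj.1 hj.2
      simp only [hF, hb, if_neg (by omega : ¬ l = 0)]
    have hTl : ∑ j ∈ Finset.Ioc (d l) (d (l+1)), F j
        = ((d (l+1) - d l : ℕ) : ℝ) * (s * (a (d l + 1))^2 / ((a (d l + 1))^2 + s)) := by
      rw [Finset.sum_congr rfl hFconst, Finset.sum_const, Nat.card_Ioc, nsmul_eq_mul]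
    have hg1 : s * (a (d l + 1))^2 / ((a (d l + 1))^2 + s)
        ≤ s * (a (d l))^2 / ((a (d l))^2 + s) :=
      gfun_mono s _ _ hs (hanonneg (d l + 1) (by omega) (by omega))
        (hamono (d l) hdl1 hdlltP)
    have hcast1 : ((d (l+1) - d l : ℕ) : ℝ) = (d (l+1) : ℝ) - (d l : ℝ) := by
      rw [Nat.cast_sub (hdmono l hld).le]
    have hcast1nn : (0:ℝ) ≤ (d (l+1) : ℝ) - (d l : ℝ) := by
      rw [← hcast1]; positivity
    have hglnn : (0:ℝ) ≤ s * (a (d l))^2 / ((a (d l))^2 + s) := by positivity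
    have hstep : ∑ j ∈ Finset.Ioc (d l) (d (l+1)), F j
        ≤ (1 + zn) * (((d l : ℝ) - (d (l-1) : ℝ)) * (s * (a (d l))^2 / ((a (d l))^2 + s))) := by
      rw [hTl, hcast1]
      calc ((d (l+1) : ℝ) - (d l : ℝ)) * (s * (a (d l + 1))^2 / ((a (d l + 1))^2 + s))
          ≤ ((d (l+1) : ℝ) - (d l : ℝ)) * (s * (a (d l))^2 / ((a (d l))^2 + s)) :=
            mul_le_mul_of_nonneg_left hg1 hcast1nn
        _ ≤ ((1 + zn) * ((d l : ℝ) - (d (l-1) : ℝ))) * (s * (a (d l))^2 / ((a (d l))^2 + s)) :=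
            mul_le_mul_of_nonneg_right (hdratio l hl.1 (by omega)) hglnn
        _ = (1 + zn) * (((d l : ℝ) - (d (l-1) : ℝ)) * (s * (a (d l))^2 / ((a (d l))^2 + s))) := by
            ring
    refine le_trans hstep (mul_le_mul_of_nonneg_left ?_ hz)
    -- (d l - d (l-1)) * g' ≤ ∑_{Ioc} φa
    have hdm : d (l-1) ≤ d l := dmono (l-1) l (by omega) (by omega)
    have hcard := Finset.card_nsmul_le_sum (Finset.Ioc (d (l-1)) (d l)) φa
        (s * (a (d l))^2 / ((a (d l))^2 + s))
        (fun j hj => by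
          rw [Finset.mem_Ioc] at hj
          have hj1 : 1 ≤ j := by omega
          exact gfun_mono s (a (d l)) (a j) hs (hanonneg (d l) hdl1 hdlP)
            (hA j (d l) hj1 hj.2 hdlP))
    rw [Nat.card_Ioc, nsmul_eq_mul, Nat.cast_sub hdm] at hcard
    exact hcard
  have hchain : ∑ l ∈ Finset.Ico 1 Dn, ∑ j ∈ Finset.Ioc (d l) (d (l+1)), F j
      ≤ (1 + zn) * ∑ j ∈ Finset.Icc 1 P, φa j := by
    calc ∑ l ∈ Finset.Ico 1 Dn, ∑ j ∈ Finset.Ioc (d l) (d (l+1)), F j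
        ≤ ∑ l ∈ Finset.Ico 1 Dn, (1 + zn) * ∑ j ∈ Finset.Ioc (d (l-1)) (d l), φa j :=
          Finset.sum_le_sum hmain
      _ = (1 + zn) * ∑ l ∈ Finset.Ico 1 Dn, ∑ j ∈ Finset.Ioc (d (l-1)) (d l), φa j := by
          rw [Finset.mul_sum]
      _ ≤ (1 + zn) * ∑ j ∈ Finset.Icc 1 P, φa j := by
          apply mul_le_mul_of_nonneg_left ?_ hz
          have hreidx : ∑ l ∈ Finset.Ico 1 Dn, ∑ j ∈ Finset.Ioc (d (l-1)) (d l), φa j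
              = ∑ i ∈ Finset.range (Dn - 1), ∑ j ∈ Finset.Ioc (d i) (d (i+1)), φa j := by
            rw [Finset.sum_Ico_eq_sum_range]
            apply Finset.sum_congr rfl
            intro i _
            have h1 : 1 + i - 1 = i := by omega
            have h2 : 1 + i = i + 1 := by omega
            rw [h1, h2]
          rw [hreidx, ← sum_blocks φa d hd0 (Dn - 1) (fun l hl => (hdmono l (by omega)).le)]
          apply Finset.sum_le_sum_of_subset_of_nonneg
          · rw [hIcc_Ioc]
            exact Finset.Ioc_subset_Ioc le_rfl (hdP (Dn - 1) (by omega))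
          · intro j _ _
            simp only [hφa]
            positivity
  have hperm_sum : ∑ j ∈ Finset.Icc 1 P, φa j
      = ∑ j ∈ Finset.Icc 1 P, s * θ j ^ 2 / (θ j ^ 2 + s) := by
    have h1 : ∑ j ∈ Finset.Icc 1 P, φa j
        = (((Finset.Icc 1 P).val.map fun j => a j).map fun x => s * x^2 / (x^2 + s)).sum := by
      rw [Multiset.map_map]
      rfl
    have h2 : ∑ j ∈ Finset.Icc 1 P, s * θ j ^ 2 / (θ j ^ 2 + s)
        = (((Finset.Icc 1 P).val.map fun j => |θ j|).map fun x => s * x^2 / (x^2 + s)).sum := by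
      rw [Multiset.map_map]
      apply Finset.sum_congr rfl
      intro j _
      simp only [Function.comp]
      rw [sq_abs]
    rw [h1, h2, haperm]
  have hfinal : ∑ j ∈ Finset.Icc 1 P, F j
      ≤ (d 1 : ℝ) * s + (1 + zn) * ∑ j ∈ Finset.Icc 1 P, s * θ j ^ 2 / (θ j ^ 2 + s) := by
    rw [hsplit, hsum_split, hT0, ← hperm_sum]
    exact add_le_add (le_refl _) hchain
  refine le_trans hstep1 (le_trans hfinal ?_)
  have : (d 1 : ℝ) * s = (d 1 : ℝ) * σ2 / n := by rw [hsdef]; ring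
  rw [this]

lemma nested_is_subsetMA (n P : ℕ) (σ2 : ℝ) (θ : ℕ → ℝ) (w : ℕ → ℝ) (hw : InSimplex P w) :
    ∃ v, IsSubsetWeight P v ∧ subsetMARisk n P σ2 θ v = nestedRisk n P P σ2 θ w := by
  classical
  set Q : Finset ℕ → Prop :=
    fun I => 1 ≤ I.card ∧ I.card ≤ P ∧ I = Finset.Icc 1 I.card with hQ
  set v : Finset ℕ → ℝ := fun I => if Q I then w I.card else 0 with hv
  have hcardIcc : ∀ m : ℕ, (Finset.Icc 1 m).card = m := by
    intro m; rw [Nat.card_Icc]; omega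
  have key : ∀ s : Finset (Finset ℕ), ∑ I ∈ s, v I = ∑ I ∈ s.filter Q, w I.card := by
    intro s; rw [Finset.sum_filter]
  have hsum : ∑ I ∈ (Finset.Icc 1 P).powerset, v I = 1 := by
    rw [key, ← hw.2]
    apply Finset.sum_nbij' (i := fun I => I.card) (j := fun m => Finset.Icc 1 m)
    · intro I hI
      simp only [Finset.mem_filter, Finset.mem_powerset] at hI
      simp only [Finset.mem_Icc]
      exact ⟨hI.2.1, hI.2.2.1⟩
    · intro m hm
      simp only [Finset.mem_Icc] at hm
      simp only [Finset.mem_filter, Finset.mem_powerset, hQ, hcardIcc]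
      exact ⟨Finset.Icc_subset_Icc le_rfl hm.2, hm.1, hm.2, trivial⟩
    · intro I hI
      simp only [Finset.mem_filter, Finset.mem_powerset, hQ] at hI
      exact hI.2.2.2.symm
    · intro m hm; exact hcardIcc m
    · intro I hI; rfl
  have hcw : ∀ j ∈ Finset.Icc 1 P, coordWeight P v j = cumw P w j := by
    intro j hj
    simp only [Finset.mem_Icc] at hj
    unfold coordWeight cumw
    rw [key, Finset.filter_filter]
    apply Finset.sum_nbij' (i := fun I => I.card) (j := fun m => Finset.Icc 1 m)
    · intro I hI
      simp only [Finset.mem_filter, Finset.mem_powerset, hQ] at hI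
      have hjI := hI.2.1
      rw [hI.2.2.2.2] at hjI
      simp only [Finset.mem_Icc] at hjI
      simp only [Finset.mem_Icc]
      exact ⟨hjI.2, hI.2.2.2.1⟩
    · intro m hm
      simp only [Finset.mem_Icc] at hm
      simp only [Finset.mem_filter, Finset.mem_powerset, hQ, hcardIcc, Finset.mem_Icc]
      exact ⟨Finset.Icc_subset_Icc le_rfl hm.2, ⟨hj.1, hm.1⟩, le_trans hj.1 hm.1, hm.2, trivial⟩
    · intro I hI
      simp only [Finset.mem_filter, Finset.mem_powerset, hQ] at hI
      exact hI.2.2.2.2.symm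
    · intro m hm; exact hcardIcc m
    · intro I hI; rfl
  refine ⟨v, ⟨?_, hsum⟩, ?_⟩
  · intro I hI
    simp only [hv]
    split_ifs with h
    · exact hw.1 I.card (Finset.mem_Icc.mpr ⟨h.1, h.2.1⟩)
    · exact le_rfl
  · have hempty : Finset.Icc (P+1) P = ∅ := Finset.Icc_eq_empty (by omega)
    rw [subsetMARisk, nestedRisk, hempty, Finset.sum_empty, add_zero]
    exact Finset.sum_congr rfl fun j hj => by rw [hcw j hj]

theorem stmt_11 (σ2 : ℝ) (hσ : 0 < σ2)
    (p : ℕ → ℕ) (hp : ∀ n, p n ≤ n)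
    (hpinf : Filter.Tendsto p Filter.atTop Filter.atTop)
    (θ : ℕ → ℕ → ℝ)
    (hbdd : ∃ B : ℝ, ∀ n, ∑ j ∈ Finset.Icc 1 (p n), θ n j ^ 2 ≤ B)
    (hmax : ∃ c : ℝ, 0 < c ∧ ∀ᶠ n in Filter.atTop, ∃ j ∈ Finset.Icc 1 (p n), c ≤ |θ n j|)
    (a : ℕ → ℕ → ℝ)
    (hamono : ∀ n, ∀ j, 1 ≤ j → j < p n → a n (j + 1) ≤ a n j)
    (hanonneg : ∀ n, ∀ j, 1 ≤ j → j ≤ p n → 0 ≤ a n j)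
    (haperm : ∀ n, ((Finset.Icc 1 (p n)).val.map fun j => |θ n j|)
        = ((Finset.Icc 1 (p n)).val.map fun j => a n j))
    (D : ℕ → ℕ) (d : ℕ → ℕ → ℕ) (z : ℕ → ℝ)
    (hz : Filter.Tendsto z Filter.atTop (nhds 0))
    (hd0 : ∀ n, d n 0 = 0) (hdD : ∀ n, d n (D n) = p n)
    (hdmono : ∀ n, ∀ l, l < D n → d n l < d n (l + 1))
    (hdratio : ∀ n, ∀ l, 1 ≤ l → l ≤ D n - 1 →
        ((d n (l + 1) : ℝ) - (d n l : ℝ)) ≤ (1 + z n) * ((d n l : ℝ) - (d n (l - 1) : ℝ)))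
    (hblock : ∀ n, ∀ l, 1 ≤ l → l ≤ D n →
        ((Finset.Icc (d n (l - 1) + 1) (d n l)).val.map fun j => |θ n j|)
          = ((Finset.Icc (d n (l - 1) + 1) (d n l)).val.map fun j => a n j))
    (RA : ℕ → ℝ)
    (hRA : ∀ n, RA n
        = sInf {r : ℝ | ∃ w, InSimplex (p n) w ∧ r = nestedRisk n (p n) (p n) σ2 (θ n) w})
    (hd1 : Filter.Tendsto (fun n => (d n 1 : ℝ) / ((n : ℝ) * rhoMA n (p n) σ2 (θ n)))
        Filter.atTop (nhds 0)) :
    Filter.Tendsto (fun n => RA n / rhoMA n (p n) σ2 (θ n)) Filter.atTop (nhds 1) := by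
  classical
  have hrhonn_aux : ∀ n P' σ2' (θ' : ℕ → ℝ) (v : Finset ℕ → ℝ), 0 ≤ σ2' →
      0 ≤ subsetMARisk n P' σ2' θ' v := by
    intro n P' σ2' θ' v hσ'
    apply Finset.sum_nonneg
    intro j _
    have h1 : (0:ℝ) ≤ (1 - coordWeight P' v j)^2 * θ' j ^2 :=
      mul_nonneg (sq_nonneg _) (sq_nonneg _)
    have h2 : (0:ℝ) ≤ σ2' * (coordWeight P' v j)^2 / n :=
      div_nonneg (mul_nonneg hσ' (sq_nonneg _)) (Nat.cast_nonneg _)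
    linarith
  have hnested_nn : ∀ n P' (w : ℕ → ℝ), 0 ≤ nestedRisk n P' P' σ2 (θ n) w := by
    intro n P' w
    apply add_nonneg
    · apply Finset.sum_nonneg
      intro j _
      have h1 : (0:ℝ) ≤ (1 - cumw P' w j)^2 * θ n j ^2 :=
        mul_nonneg (sq_nonneg _) (sq_nonneg _)
      have h2 : (0:ℝ) ≤ σ2 * (cumw P' w j)^2 / n :=
        div_nonneg (mul_nonneg hσ.le (sq_nonneg _)) (Nat.cast_nonneg _)
      linarith
    · exact Finset.sum_nonneg fun l _ => sq_nonneg _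
  set ρ : ℕ → ℝ := fun n => rhoMA n (p n) σ2 (θ n) with hρdef
  set G : ℕ → ℝ := fun n =>
    ∑ j ∈ Finset.Icc 1 (p n), σ2/(n:ℝ) * θ n j ^ 2 / (θ n j ^ 2 + σ2/(n:ℝ)) with hGdef
  have hMAne : ∀ n, {r : ℝ | ∃ v, IsSubsetWeight (p n) v
      ∧ r = subsetMARisk n (p n) σ2 (θ n) v}.Nonempty := by
    intro n
    refine ⟨subsetMARisk n (p n) σ2 (θ n) (fun I => if I = ∅ then 1 else 0),
      ⟨fun I => if I = ∅ then 1 else 0, ⟨?_, ?_⟩, rfl⟩⟩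
    · intro I _
      dsimp only
      split_ifs <;> norm_num
    · rw [Finset.sum_ite_eq' _ (∅ : Finset ℕ) (fun _ => (1:ℝ))]
      simp [Finset.empty_mem_powerset]
  have hMAbdd : ∀ n, BddBelow {r : ℝ | ∃ v, IsSubsetWeight (p n) v
      ∧ r = subsetMARisk n (p n) σ2 (θ n) v} := by
    intro n
    exact ⟨0, fun r ⟨v, hv, hr⟩ => hr ▸ hrhonn_aux n (p n) σ2 (θ n) v hσ.le⟩
  have hGle : ∀ n, 1 ≤ n → G n ≤ ρ n := by
    intro n hn
    have hn0 : (0:ℝ) < n := by exact_mod_cast hn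
    apply le_csInf (hMAne n)
    rintro r ⟨v, hv, rfl⟩
    apply Finset.sum_le_sum
    intro j _
    have hlb := ptwise_lb (σ2/n) (θ n j ^ 2) (coordWeight (p n) v j)
      (sq_nonneg _) (div_pos hσ hn0)
    have he1 : σ2/(n:ℝ) * θ n j ^2 / (θ n j ^2 + σ2/(n:ℝ))
        = σ2/(n:ℝ) * θ n j ^2 / (θ n j ^2 + σ2/(n:ℝ)) := rfl
    have he2 : (σ2/(n:ℝ)) * (coordWeight (p n) v j)^2
        = σ2 * (coordWeight (p n) v j)^2 / n := by ring
    linarith [hlb]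
  have hGnn : ∀ n, 0 ≤ G n := by
    intro n
    apply Finset.sum_nonneg
    intro j _
    apply div_nonneg
    · exact mul_nonneg (div_nonneg hσ.le (Nat.cast_nonneg _)) (sq_nonneg _)
    · exact add_nonneg (sq_nonneg _) (div_nonneg hσ.le (Nat.cast_nonneg _))
  have hρleRA : ∀ n, 1 ≤ p n → ρ n ≤ RA n := by
    intro n hpn
    rw [hRA n]
    have hw0 : InSimplex (p n) (fun m => if m = p n then 1 else 0) := by
      constructor
      · intro m _
        dsimp only
        split_ifs <;> norm_num
      · rw [Finset.sum_ite_eq' _ (p n) (fun _ => (1:ℝ))]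
        simp [Finset.mem_Icc, hpn]
    apply csInf_le_csInf (hMAbdd n)
    · exact ⟨nestedRisk n (p n) (p n) σ2 (θ n) (fun m => if m = p n then 1 else 0),
        ⟨_, hw0, rfl⟩⟩
    · rintro r ⟨w, hw, rfl⟩
      obtain ⟨v, hv, hveq⟩ := nested_is_subsetMA n (p n) σ2 (θ n) w hw
      exact ⟨v, hv, hveq.symm⟩
  have hRAub : ∀ n, 1 ≤ n → 1 ≤ p n → 0 ≤ 1 + z n →
      RA n ≤ (d n 1 : ℝ) * σ2 / n + (1 + z n) * G n := by
    intro n h1 h2 h3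
    obtain ⟨w, hw, hle⟩ := upper_bound n (p n) (D n) σ2 (θ n) (a n) (d n) (z n)
      hσ h1 h2 (hamono n) (hanonneg n) (haperm n) (hd0 n) (hdD n) (hdmono n)
      (hdratio n) (hblock n) h3
    rw [hRA n]
    refine le_trans (csInf_le ?_ ⟨w, hw, rfl⟩) hle
    exact ⟨0, fun r ⟨w', hw', hr⟩ => hr ▸ hnested_nn n (p n) w'⟩
  obtain ⟨c, hc, hcev⟩ := hmax
  have hρpos : ∀ᶠ n in Filter.atTop, 0 < ρ n := by
    filter_upwards [hcev, Filter.eventually_ge_atTop 1,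
      hpinf.eventually (Filter.eventually_ge_atTop 1)] with n hcn hn1 hpn1
    obtain ⟨j, hjmem, hjc⟩ := hcn
    have hn0 : (0:ℝ) < n := by exact_mod_cast hn1
    have hs0 : 0 < σ2/(n:ℝ) := div_pos hσ hn0
    have hterm : σ2/(n:ℝ) * c^2 / (c^2 + σ2/(n:ℝ))
        ≤ σ2/(n:ℝ) * θ n j ^2 / (θ n j ^2 + σ2/(n:ℝ)) := by
      have hg := gfun_mono (σ2/(n:ℝ)) c |θ n j| hs0 hc.le hjc
      rw [sq_abs] at hg
      exact hg
    have hsingle : σ2/(n:ℝ) * θ n j ^2 / (θ n j ^2 + σ2/(n:ℝ)) ≤ G n := by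
      apply Finset.single_le_sum (f := fun i =>
        σ2/(n:ℝ) * θ n i ^ 2 / (θ n i ^ 2 + σ2/(n:ℝ))) ?_ hjmem
      intro i _
      apply div_nonneg (mul_nonneg hs0.le (sq_nonneg _))
        (add_nonneg (sq_nonneg _) hs0.le)
    have hpos : 0 < σ2/(n:ℝ) * c^2 / (c^2 + σ2/(n:ℝ)) := by positivity
    have := hGle n hn1
    linarith
  have hzev : ∀ᶠ n in Filter.atTop, (-1:ℝ) < z n :=
    hz.eventually (eventually_gt_nhds (by norm_num : (-1:ℝ) < 0))
  have hlow : ∀ᶠ n in Filter.atTop, 1 ≤ RA n / ρ n := by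
    filter_upwards [hρpos, hpinf.eventually (Filter.eventually_ge_atTop 1)] with n h1 h2
    rw [le_div_iff₀ h1, one_mul]
    exact hρleRA n h2
  have hup : ∀ᶠ n in Filter.atTop,
      RA n / ρ n ≤ σ2 * ((d n 1 : ℝ) / ((n:ℝ) * ρ n)) + (1 + z n) := by
    filter_upwards [hρpos, hpinf.eventually (Filter.eventually_ge_atTop 1),
      Filter.eventually_ge_atTop 1, hzev] with n h1 h2 h3 h4
    have hn0 : (0:ℝ) < n := by exact_mod_cast h3
    have hzn : 0 ≤ 1 + z n := by linarith
    have hA := hRAub n h3 h2 hzn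
    have hB := hGle n h3
    have hRAbound : RA n ≤ (d n 1 : ℝ) * σ2 / n + (1 + z n) * ρ n := by
      have := mul_le_mul_of_nonneg_left hB hzn
      linarith
    rw [div_le_iff₀ h1]
    have heq : (σ2 * ((d n 1 : ℝ) / ((n:ℝ) * ρ n)) + (1 + z n)) * ρ n
        = (d n 1 : ℝ) * σ2 / n + (1 + z n) * ρ n := by
      field_simp
    rw [heq]
    exact hRAbound
  have hlim : Filter.Tendsto
      (fun n => σ2 * ((d n 1 : ℝ) / ((n:ℝ) * ρ n)) + (1 + z n))
      Filter.atTop (nhds 1) := by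
    have h1 := hd1.const_mul σ2
    have h2 : Filter.Tendsto (fun n => 1 + z n) Filter.atTop (nhds (1 + 0)) :=
      tendsto_const_nhds.add hz
    have h3 := h1.add h2
    simpa using h3
  exact tendsto_of_tendsto_of_tendsto_of_le_of_le' tendsto_const_nhds hlim hlow hup
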